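/- Let h₁, …, h_m be positive integers and, for n ∈ ℕ, let c_n be the (finite) number of tuples (k₁, …, k_m) ∈ ℕ^m with Σ_{i=1}^m k_i h_i = n. Then c is a quasipolynomial (periodic polynomial) for n ≥ 1: there exist a positive integer M and polynomials p₀, …, p_{M−1} with complex coefficients such that c_n = p_{n mod M}(n) for every integer n ≥ 1. (The solution of the knapsack problem derived in Section 1.1: the partition function is a sum of functions which are polynomials on each coset modulo M.) -/

import Mathlib

open Polynomial Finset

namespace Stmt14Aux

/-- forward difference with step `M` -/
def DD (M : ℕ) (f : ℕ → ℂ) : ℕ → ℂ := fun n => f (n + M) - f n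

lemma DD_iterate_shift (M a k : ℕ) : ∀ (f : ℕ → ℂ) (x : ℕ),
    (DD M)^[k] (fun n => f (n + a)) x = (DD M)^[k] f (x + a) := by
  induction k with
  | zero => intro f x; simp
  | succ k ih =>
    intro f x
    rw [Function.iterate_succ_apply, Function.iterate_succ_apply]
    have h1 : DD M (fun n => f (n + a)) = fun n => (DD M f) (n + a) := by
      funext n; simp [DD, add_right_comm]
    rw [h1, ih]

lemma DD_iterate_sum {ι : Type*} (M k : ℕ) (s : Finset ι) : ∀ (g : ι → ℕ → ℂ) (x : ℕ),
    (DD M)^[k] (fun n => ∑ i ∈ s, g i n) x = ∑ i ∈ s, (DD M)^[k] (g i) x := by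
  induction k with
  | zero => intro g x; simp
  | succ k ih =>
    intro g x
    rw [Function.iterate_succ_apply]
    have h1 : DD M (fun n => ∑ i ∈ s, g i n) = fun n => ∑ i ∈ s, DD M (g i) n := by
      funext n; simp [DD, Finset.sum_sub_distrib]
    rw [h1, ih]
    exact Finset.sum_congr rfl fun i _ => by rw [Function.iterate_succ_apply]

lemma telescope (M u : ℕ) (f : ℕ → ℂ) (x : ℕ) :
    DD (M * u) f x = ∑ i ∈ range u, DD M f (x + i * M) := by
  induction u with
  | zero => simp [DD]
  | succ u ih =>
    rw [Finset.sum_range_succ, ← ih]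
    simp only [DD]
    rw [show x + M * (u + 1) = x + u * M + M from by ring,
      show x + M * u = x + u * M from by ring]
    ring

lemma DD_mul (M u d : ℕ) : ∀ (g : ℕ → ℂ), (∀ n, 1 ≤ n → (DD M)^[d] g n = 0) →
    ∀ n, 1 ≤ n → (DD (M * u))^[d] g n = 0 := by
  induction d with
  | zero => intro g hg n hn; exact hg n hn
  | succ d ih =>
    intro g hg n hn
    rw [Function.iterate_succ_apply]
    have h1 : DD (M * u) g = fun x => ∑ i ∈ range u, (fun y => DD M g (y + i * M)) x :=
      funext fun x => telescope M u g x
    rw [h1, DD_iterate_sum]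
    refine Finset.sum_eq_zero fun i _ => ?_
    rw [DD_iterate_shift]
    refine ih (DD M g) (fun x hx => ?_) _ (le_trans hn (Nat.le_add_right _ _))
    rw [← Function.iterate_succ_apply]
    exact hg x hx

lemma newton (d : ℕ) : ∀ (t : ℕ) (g : ℕ → ℂ), (∀ s, (DD 1)^[d + 1] g s = 0) →
    g t = ∑ i ∈ range (d + 1), (DD 1)^[i] g 0 * (t.choose i : ℂ) := by
  intro t
  induction t with
  | zero =>
    intro g hg
    rw [Finset.sum_eq_single 0]
    · simp
    · intro i _ hi
      obtain ⟨j, rfl⟩ := Nat.exists_eq_succ_of_ne_zero hi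
      simp [Nat.choose_zero_succ]
    · simp
  | succ t ih =>
    intro g hg
    have hg' : ∀ s, (DD 1)^[d + 1] (DD 1 g) s = 0 := by
      intro s
      rw [← Function.iterate_succ_apply, Function.iterate_succ_apply']
      simp [DD, hg]
    have e1 : g (t + 1) = g t + DD 1 g t := by simp [DD]
    rw [e1, ih g hg, ih (DD 1 g) hg']
    have ha : ∀ i, (DD 1)^[i] (DD 1 g) 0 = (DD 1)^[i + 1] g 0 := fun i => by
      rw [Function.iterate_succ_apply]
    -- RHS manipulation
    rw [Finset.sum_range_succ' (fun i => (DD 1)^[i] g 0 * ((t + 1).choose i : ℂ)) d]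
    have e2 : ∀ i, ((t + 1).choose (i + 1) : ℂ) = (t.choose i : ℂ) + (t.choose (i + 1) : ℂ) := by
      intro i; rw [Nat.choose_succ_succ']; push_cast; ring
    simp only [e2]
    rw [Finset.sum_range_succ' (fun i => (DD 1)^[i] g 0 * (t.choose i : ℂ)) d]
    rw [Finset.sum_range_succ (fun i => (DD 1)^[i] (DD 1 g) 0 * (t.choose i : ℂ)) d]
    simp only [ha]
    rw [show (DD 1)^[d + 1] g 0 = 0 from hg 0]
    simp only [mul_add, Finset.sum_add_distrib, zero_mul, add_zero, Nat.choose_zero_right]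
    ring

lemma choose_poly (i : ℕ) : ∃ P : Polynomial ℂ, ∀ t : ℕ, P.eval (t : ℂ) = (t.choose i : ℂ) := by
  refine ⟨Polynomial.C ((i.factorial : ℂ))⁻¹ * descPochhammer ℂ i, fun t => ?_⟩
  rw [eval_mul, eval_C, descPochhammer_eval_eq_descFactorial,
    Nat.descFactorial_eq_factorial_mul_choose]
  push_cast
  rw [← mul_assoc, inv_mul_cancel₀ (by exact_mod_cast i.factorial_ne_zero), one_mul]

lemma DD_one_iter (M a k : ℕ) : ∀ (c : ℕ → ℂ) (s : ℕ),
    (DD 1)^[k] (fun t => c (a + t * M)) s = (DD M)^[k] c (a + s * M) := by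
  induction k with
  | zero => intro c s; simp
  | succ k ih =>
    intro c s
    rw [Function.iterate_succ_apply, Function.iterate_succ_apply]
    have h1 : DD 1 (fun t => c (a + t * M)) = fun t => (DD M c) (a + t * M) := by
      funext t
      simp only [DD]
      rw [show a + (t + 1) * M = a + t * M + M from by ring]
    rw [h1, ih]

lemma quasipoly (M d : ℕ) (hM : 0 < M) (c : ℕ → ℂ)
    (hd : ∀ n, 1 ≤ n → (DD M)^[d + 1] c n = 0) :
    ∃ p : ℕ → Polynomial ℂ, ∀ n, 1 ≤ n → c n = (p (n % M)).eval (n : ℂ) := by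
  choose P hP using choose_poly
  set n₀ : ℕ → ℕ := fun r => if r = 0 then M else r with hn₀
  set Q : ℕ → Polynomial ℂ := fun r =>
    ∑ i ∈ range (d + 1), Polynomial.C ((DD M)^[i] c (n₀ r)) * P i with hQ
  refine ⟨fun r => (Q r).comp (Polynomial.C ((M : ℂ))⁻¹ * (Polynomial.X - Polynomial.C ((n₀ r : ℕ) : ℂ))), fun n hn => ?_⟩
  set r := n % M with hr
  have hrM : r < M := Nat.mod_lt _ hM
  have hn₀pos : 1 ≤ n₀ r := by simp only [hn₀]; split <;> omega
  obtain ⟨t, ht⟩ : ∃ t, n = n₀ r + t * M := by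
    have h1 : r + M * (n / M) = n := Nat.mod_add_div n M
    set q := n / M with hq
    clear_value q
    by_cases h0 : r = 0
    · have hq1 : q ≠ 0 := by
        intro hz
        rw [h0, hz] at h1
        simp at h1
        omega
      obtain ⟨q', hq'⟩ : ∃ q', q = q' + 1 := ⟨q - 1, by omega⟩
      refine ⟨q', ?_⟩
      simp only [hn₀, h0, if_true]
      rw [h0, hq'] at h1
      rw [← h1]; ring
    · refine ⟨q, ?_⟩
      simp only [hn₀, h0, if_false]
      rw [← h1]; ring
  -- Newton applies to g = fun t => c (n₀ r + t * M)
  have hg : ∀ s, (DD 1)^[d + 1] (fun t => c (n₀ r + t * M)) s = 0 := by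
    intro s
    rw [DD_one_iter]
    exact hd _ (le_trans hn₀pos (Nat.le_add_right _ _))
  have hnewton := newton d t (fun t => c (n₀ r + t * M)) hg
  simp only [DD_one_iter] at hnewton
  -- evaluate the composed polynomial
  have hM0 : (M : ℂ) ≠ 0 := Nat.cast_ne_zero.mpr hM.ne'
  have htc : ((M : ℂ))⁻¹ * ((n : ℂ) - ((n₀ r : ℕ) : ℂ)) = (t : ℂ) := by
    have : (n : ℂ) = ((n₀ r : ℕ) : ℂ) + (t : ℂ) * (M : ℂ) := by
      rw [ht]; push_cast; ring
    rw [this]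
    field_simp
    ring
  rw [eval_comp, eval_mul, eval_C, eval_sub, eval_X, eval_C, htc]
  simp only [zero_mul, add_zero] at hnewton
  conv_lhs => rw [ht]
  rw [hnewton, hQ]
  simp only [eval_finset_sum, eval_mul, eval_C]
  exact Finset.sum_congr rfl fun i _ => by rw [hP i t]
section Comb

lemma knapFinite (m : ℕ) (h : Fin m → ℕ) (hpos : ∀ i, 0 < h i) (n : ℕ) :
    Finite {k : Fin m → ℕ // ∑ i, k i * h i = n} := by
  have hb : ∀ (k : {k : Fin m → ℕ // ∑ i, k i * h i = n}) (i : Fin m), k.1 i < n + 1 := by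
    intro k i
    have h1 : k.1 i * h i ≤ n :=
      le_trans (Finset.single_le_sum (f := fun i => k.1 i * h i)
        (fun _ _ => Nat.zero_le _) (Finset.mem_univ i)) (le_of_eq k.2)
    have h2 : k.1 i ≤ k.1 i * h i := Nat.le_mul_of_pos_right _ (hpos i)
    omega
  apply Finite.of_injective
    (fun k => (fun i => (⟨k.1 i, hb k i⟩ : Fin (n + 1)) : Fin m → Fin (n + 1)))
  intro k k' he
  apply Subtype.ext
  funext i
  exact congrArg Fin.val (congrFun he i)

variable {m : ℕ} (h : Fin (m + 1) → ℕ)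

lemma hsum (k : Fin (m + 1) → ℕ) : ∑ i, k i * h i
    = (∑ i : Fin m, k i.castSucc * h i.castSucc) + k (Fin.last m) * h (Fin.last m) :=
  Fin.sum_univ_castSucc (fun i => k i * h i)

lemma sum_update (k : Fin (m + 1) → ℕ) (b : ℕ) :
    ∑ i, Function.update k (Fin.last m) b i * h i
      = (∑ i : Fin m, k i.castSucc * h i.castSucc) + b * h (Fin.last m) := by
  rw [hsum]
  congr 1
  · refine Finset.sum_congr rfl fun i _ => ?_
    rw [Function.update_of_ne (Fin.castSucc_lt_last i).ne]
  · rw [Function.update_self]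

lemma sum_snoc (k' : Fin m → ℕ) (b : ℕ) :
    ∑ i, (Fin.snoc k' b : Fin (m + 1) → ℕ) i * h i
      = (∑ i : Fin m, k' i * h i.castSucc) + b * h (Fin.last m) := by
  rw [hsum]
  simp [Fin.snoc_castSucc, Fin.snoc_last]

lemma recur (hpos : ∀ i, 0 < h i) (n : ℕ) :
    Nat.card {k : Fin (m + 1) → ℕ // ∑ i, k i * h i = n + h (Fin.last m)}
      = Nat.card {k' : Fin m → ℕ // ∑ i, k' i * h i.castSucc = n + h (Fin.last m)}
        + Nat.card {k : Fin (m + 1) → ℕ // ∑ i, k i * h i = n} := by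
  haveI := knapFinite m (fun i => h i.castSucc) (fun i => hpos _) (n + h (Fin.last m))
  haveI := knapFinite (m + 1) h hpos n
  rw [← Nat.card_sum]
  apply Nat.card_congr
  refine
    { toFun := fun k => if h0 : k.1 (Fin.last m) = 0
        then Sum.inl ⟨fun i => k.1 i.castSucc, by
          have hk := k.2
          rw [hsum h k.1, h0, zero_mul, add_zero] at hk
          exact hk⟩
        else Sum.inr ⟨Function.update k.1 (Fin.last m) (k.1 (Fin.last m) - 1), by
          have hk := k.2
          rw [hsum h k.1] at hk
          rw [sum_update]
          obtain ⟨b, hb⟩ := Nat.exists_eq_succ_of_ne_zero h0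
          rw [hb] at hk ⊢
          rw [Nat.succ_sub_one]
          rw [Nat.succ_mul, ← add_assoc] at hk
          exact Nat.add_right_cancel hk⟩,
      invFun := fun x => Sum.rec
        (fun k' => ⟨Fin.snoc k'.1 0, by
          rw [sum_snoc, zero_mul, add_zero]
          exact k'.2⟩)
        (fun k => ⟨Function.update k.1 (Fin.last m) (k.1 (Fin.last m) + 1), by
          have hk := k.2
          rw [hsum h k.1] at hk
          rw [sum_update, Nat.succ_mul, ← add_assoc, hk]⟩) x,
      left_inv := ?_,
      right_inv := ?_ }
  · rintro ⟨k, hk⟩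
    by_cases h0 : k (Fin.last m) = 0
    · simp only [dif_pos h0]
      apply Subtype.ext
      funext i
      refine Fin.lastCases ?_ (fun j => ?_) i
      · simp [Fin.snoc_last, h0]
      · simp [Fin.snoc_castSucc]
    · simp only [dif_neg h0]
      apply Subtype.ext
      simp only
      rw [Function.update_self, Function.update_idem,
        Nat.sub_add_cancel (Nat.one_le_iff_ne_zero.mpr h0), Function.update_eq_self]
  · rintro (⟨k', hk'⟩ | ⟨k, hk⟩)
    · simp only
      rw [dif_pos (Fin.snoc_last (α := fun _ => ℕ) 0 k')]
      congr 1
      apply Subtype.ext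
      funext i
      simp [Fin.snoc_castSucc]
    · simp only
      have hne : Function.update k (Fin.last m) (k (Fin.last m) + 1) (Fin.last m) ≠ 0 := by
        rw [Function.update_self]; exact Nat.succ_ne_zero _
      rw [dif_neg hne]
      congr 1
      apply Subtype.ext
      simp only
      rw [Function.update_self, Nat.succ_sub_one, Function.update_idem, Function.update_eq_self]

lemma card_zero (h : Fin 0 → ℕ) (n : ℕ) (hn : 1 ≤ n) :
    Nat.card {k : Fin 0 → ℕ // ∑ i, k i * h i = n} = 0 := by
  have : IsEmpty {k : Fin 0 → ℕ // ∑ i, k i * h i = n} := by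
    refine ⟨fun k => ?_⟩
    have := k.2
    simp at this
    omega
  exact Nat.card_of_isEmpty

end Comb

lemma main : ∀ (m : ℕ) (h : Fin m → ℕ), (∀ i, 0 < h i) →
    ∃ M, 0 < M ∧ ∃ d, ∀ n, 1 ≤ n →
      (DD M)^[d + 1] (fun n => (Nat.card {k : Fin m → ℕ // ∑ i, k i * h i = n} : ℂ)) n = 0 := by
  intro m
  induction m with
  | zero =>
    intro h _
    refine ⟨1, one_pos, 0, fun n hn => ?_⟩
    have h1 : (DD 1)^[0 + 1] = DD 1 := by
      simp
    rw [h1]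
    simp only [DD]
    rw [card_zero h n hn, card_zero h (n + 1) (by omega)]
    simp
  | succ m ih =>
    intro h hpos
    obtain ⟨M, hM, d, hd⟩ := ih (fun i => h i.castSucc) (fun i => hpos _)
    have hlpos : 0 < h (Fin.last m) := hpos _
    refine ⟨M * h (Fin.last m), Nat.mul_pos hM hlpos, d + 1, ?_⟩
    set f : ℕ → ℂ :=
      fun n => (Nat.card {k : Fin (m + 1) → ℕ // ∑ i, k i * h i = n} : ℂ) with hf
    set fm : ℕ → ℂ :=
      fun n => (Nat.card {k : Fin m → ℕ // ∑ i, k i * h i.castSucc = n} : ℂ) with hfm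
    have hd' : ∀ n, 1 ≤ n → (DD M)^[d + 1] fm n = 0 := hd
    have hrec : ∀ x, DD (h (Fin.last m)) f x = fm (x + h (Fin.last m)) := by
      intro x
      have hR := recur h hpos x
      have hC : (Nat.card {k : Fin (m + 1) → ℕ // ∑ i, k i * h i = x + h (Fin.last m)} : ℂ)
          = (Nat.card {k' : Fin m → ℕ // ∑ i, k' i * h i.castSucc = x + h (Fin.last m)} : ℂ)
            + (Nat.card {k : Fin (m + 1) → ℕ // ∑ i, k i * h i = x} : ℂ) := by
        rw [hR]; push_cast; ring
      simp only [DD, hf, hfm]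
      rw [hC]
      ring
    have h2 : DD (M * h (Fin.last m)) f
        = fun x => ∑ i ∈ range M,
            (fun y => fm (y + (i * h (Fin.last m) + h (Fin.last m)))) x := by
      funext x
      rw [show M * h (Fin.last m) = h (Fin.last m) * M from mul_comm _ _,
        telescope]
      refine Finset.sum_congr rfl fun i _ => ?_
      rw [hrec]
      congr 1
      ring
    intro n hn
    rw [Function.iterate_succ_apply, h2, DD_iterate_sum]
    refine Finset.sum_eq_zero fun i _ => ?_
    rw [DD_iterate_shift]
    exact DD_mul M (h (Fin.last m)) (d + 1) fm hd' _ (le_trans hn (Nat.le_add_right _ _))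

end Stmt14Aux

/-- **The knapsack problem (Section 1.1).** Given positive integers `h₁,…,h_m`, the partition
function `c_n = #{(k₁,…,k_m) ∈ ℕ^m : Σ kᵢhᵢ = n}` is a periodic polynomial (quasipolynomial)
for `n ≥ 1`: there exist `M > 0` and polynomials `p₀,…,p_{M−1}` over `ℂ` with
`c_n = p_{n mod M}(n)` for all `n ≥ 1`. -/
theorem stmt14 (m : ℕ) (h : Fin m → ℕ) (hpos : ∀ i, 0 < h i)
    (c : ℕ → ℕ) (hc : ∀ n, c n = Nat.card {k : Fin m → ℕ // ∑ i, k i * h i = n}) :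
    ∃ M : ℕ, 0 < M ∧ ∃ p : ℕ → Polynomial ℂ,
      ∀ n : ℕ, 1 ≤ n → (c n : ℂ) = (p (n % M)).eval (n : ℂ) := by
  obtain ⟨M, hM, d, hd⟩ := Stmt14Aux.main m h hpos
  have hd' : ∀ n, 1 ≤ n → (Stmt14Aux.DD M)^[d + 1] (fun n => ((c n : ℕ) : ℂ)) n = 0 := by
    have he : (fun n => ((c n : ℕ) : ℂ))
        = fun n => (Nat.card {k : Fin m → ℕ // ∑ i, k i * h i = n} : ℂ) := by
      funext n; rw [hc n]
    rw [he]
    exact hd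
  obtain ⟨p, hp⟩ := Stmt14Aux.quasipoly M d hM _ hd'
  exact ⟨M, hM, p, hp⟩
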